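/- arXiv:1009.1101 — 4 statements merged into one kernel-verified Lean document; each statement's English description precedes it below -/
import Mathlib

section
/- Let K be a number field of degree n = s + 2t with t > 0, having s real embeddings σ₁,…,σ_s and 2t complex embeddings. Let O_K be its ring of integers and let σ : O_K → ℝ^s be the map ξ ↦ (σ₁(ξ),…,σ_s(ξ)). Then the image σ(O_K) is dense in ℝ^s. -/
open NumberField

/-- Real embeddings `K →+* ℝ` are in bijection with real complex embeddings. -/
noncomputable def realEmbeddingEquiv (K : Type*) [Field K] :
    (K →+* ℝ) ≃ { φ : K →+* ℂ // NumberField.ComplexEmbedding.IsReal φ } where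
  toFun φ := ⟨Complex.ofRealHom.comp φ, by
    rw [NumberField.ComplexEmbedding.isReal_iff]
    ext x
    simp [Complex.conj_ofReal]⟩
  invFun ψ := NumberField.ComplexEmbedding.IsReal.embedding ψ.prop
  left_inv φ := by
    ext x
    simp [NumberField.ComplexEmbedding.IsReal.embedding]
  right_inv ψ := by
    ext x
    simpa [NumberField.ComplexEmbedding.IsReal.embedding] using
      (Complex.conj_eq_iff_re.mp (RingHom.congr_fun ψ.prop x))

/-- Minkowski-type lemma: if `K` has a complex place, then for every `δ > 0` there is a
nonzero algebraic integer all of whose real places are `< δ`. -/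
theorem exists_int_small_at_real_places (K : Type*) [Field K] [NumberField K]
    [Nonempty {w : InfinitePlace K // w.IsComplex}] {δ : ℝ} (hδ : 0 < δ) :
    ∃ α : 𝓞 K, α ≠ 0 ∧ ∀ w : InfinitePlace K, w.IsReal → w (algebraMap (𝓞 K) K α) < δ := by
  classical
  obtain ⟨w₁⟩ := ‹Nonempty {w : InfinitePlace K // w.IsComplex}›
  set f : InfinitePlace K → NNReal := fun _ => δ.toNNReal with hf
  have hfpos : ∀ w : InfinitePlace K, w ≠ w₁.1 → f w ≠ 0 := by
    intro w _
    simp [hf, Real.toNNReal_eq_zero, not_le, hδ]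
  -- choose B large enough
  have hfac : (mixedEmbedding.convexBodyLTFactor K : ENNReal) ≠ 0 := by
    exact_mod_cast mixedEmbedding.convexBodyLTFactor_ne_zero K
  obtain ⟨n, hn⟩ := ENNReal.exists_nat_gt
    (ENNReal.div_lt_top (mixedEmbedding.minkowskiBound_lt_top K 1).ne hfac).ne
  have hB : mixedEmbedding.minkowskiBound K 1 <
      (mixedEmbedding.convexBodyLTFactor K : ENNReal) * (n : NNReal) := by
    rw [ENNReal.div_lt_iff (Or.inl hfac) (Or.inl ENNReal.coe_ne_top)] at hn
    calc mixedEmbedding.minkowskiBound K 1 < (n : ENNReal) *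
          (mixedEmbedding.convexBodyLTFactor K : ENNReal) := by
          simpa using hn
      _ = (mixedEmbedding.convexBodyLTFactor K : ENNReal) * (n : NNReal) := by
          rw [mul_comm]; norm_cast
  obtain ⟨g, hgf, hgprod⟩ := mixedEmbedding.adjust_f K (f := f) (w₁ := w₁.1) (n : NNReal) hfpos
  obtain ⟨α, hα0, hαlt⟩ := mixedEmbedding.exists_ne_zero_mem_ringOfIntegers_lt K (f := g)
    (by
      rw [mixedEmbedding.convexBodyLT_volume, hgprod]
      exact hB)
  refine ⟨α, hα0, fun w hw => ?_⟩
  have hne : w ≠ w₁.1 := by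
    intro h
    rw [h] at hw
    exact (InfinitePlace.not_isReal_iff_isComplex.mpr w₁.2) hw
  have := hαlt w
  rw [hgf w hne] at this
  simpa [hf, Real.coe_toNNReal _ hδ.le] using this

/-- Let `K` be a number field of degree `n = s + 2t`, `t > 0`, having
exactly `s` real embeddings `σr 0, …, σr (s-1)` (so `σr` is a bijection onto the type of
real embeddings `K →+* ℝ`) and `2t` complex embeddings.  Then the image of the ring of
integers `𝓞 K` under `ξ ↦ (σr i ξ)ᵢ` is dense in `ℝ^s`. -/
theorem ot_integers_dense_in_real_embeddings
    (K : Type*) [Field K] [NumberField K] (s t : ℕ) (ht : 0 < t)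
    (hdeg : Module.finrank ℚ K = s + 2 * t)
    (σr : Fin s → (K →+* ℝ)) (hσr : Function.Bijective σr) :
    DenseRange (fun ξ : 𝓞 K => (fun i => σr i (algebraMap (𝓞 K) K ξ) : Fin s → ℝ)) := by
  classical
  -- the equivalence between `Fin s` and real places
  let E : Fin s ≃ {w : InfinitePlace K // w.IsReal} :=
    (Equiv.ofBijective σr hσr).trans ((realEmbeddingEquiv K).trans InfinitePlace.mkReal)
  -- coordinate compatibility
  have hE : ∀ (i : Fin s) (x : K),
      (mixedEmbedding K x).1 (E i) = σr i x := by
    intro i x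
    rw [mixedEmbedding.mixedEmbedding_apply_isReal]
    apply Complex.ofReal_injective
    rw [InfinitePlace.embedding_of_isReal_apply]
    have : (E i : InfinitePlace K) = InfinitePlace.mk (Complex.ofRealHom.comp (σr i)) := rfl
    rw [this, InfinitePlace.embedding_mk_eq_of_isReal]
    · rfl
    · rw [NumberField.ComplexEmbedding.isReal_iff]
      ext x
      simp [Complex.conj_ofReal]
  -- there is a complex place
  have hcards : NumberField.InfinitePlace.nrRealPlaces K = s := by
    rw [← InfinitePlace.card_real_embeddings]
    rw [← Fintype.card_fin s]
    exact (Fintype.card_congr ((Equiv.ofBijective σr hσr).trans (realEmbeddingEquiv K))).symm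
  have hcardc : NumberField.InfinitePlace.nrComplexPlaces K = t := by
    have := InfinitePlace.card_add_two_mul_card_eq_rank K
    rw [hcards, hdeg] at this
    omega
  have : Nonempty {w : InfinitePlace K // w.IsComplex} :=
    Fintype.card_pos_iff.mp (lt_of_lt_of_eq ht hcardc.symm)
  -- fundamental domain bound
  obtain ⟨μ, hμ⟩ := isBounded_iff_forall_norm_le.1
    (ZSpan.fundamentalDomain_isBounded (mixedEmbedding.latticeBasis K))
  set M : ℝ := max μ 0 with hM
  have hM0 : 0 ≤ M := le_max_right _ _
  rw [Metric.denseRange_iff]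
  intro a ε hε
  set δ : ℝ := ε / (M + 1) with hδdef
  have hδ : 0 < δ := div_pos hε (by linarith)
  obtain ⟨α, hα0, hαlt⟩ := exists_int_small_at_real_places K hδ
  have hαK : (algebraMap (𝓞 K) K α) ≠ 0 := by
    simpa using (RingOfIntegers.coe_ne_zero_iff).mpr hα0
  -- target vector in the mixed space
  set e : Fin s → ℝ := fun i => σr i (algebraMap (𝓞 K) K α) with he
  have he0 : ∀ i, e i ≠ 0 := by
    intro i h
    rw [he] at h
    rw [← map_zero (σr i)] at h
    exact hαK ((σr i).injective h)
  set v : mixedEmbedding.mixedSpace K :=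
    (fun w => a (E.symm w) / e (E.symm w), fun _ => 0) with hv
  obtain ⟨gsub, hgF, -⟩ :=
    ZSpan.exist_unique_vadd_mem_fundamentalDomain (mixedEmbedding.latticeBasis K) v
  have hgmem : (-(gsub : mixedEmbedding.mixedSpace K)) ∈
      mixedEmbedding.integerLattice K := by
    rw [← mixedEmbedding.mem_span_latticeBasis]
    exact neg_mem gsub.2
  obtain ⟨β, hβ⟩ := hgmem
  have hβ' : mixedEmbedding K (algebraMap (𝓞 K) K β) = -(gsub : mixedEmbedding.mixedSpace K) := hβ
  refine ⟨α * β, ?_⟩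
  have hFnorm : ‖(gsub : mixedEmbedding.mixedSpace K) + v‖ ≤ M := by
    refine le_trans (hμ _ ?_) (le_max_left _ _)
    exact hgF
  rw [dist_pi_lt_iff hε]
  intro i
  have hv1 : v.1 (E i) = a i / e i := by
    simp [hv, Equiv.symm_apply_apply]
  have hneg : (-(gsub : mixedEmbedding.mixedSpace K)).1 (E i)
      = v.1 (E i) - (((gsub : mixedEmbedding.mixedSpace K) + v).1 (E i)) := by
    simp [Prod.fst_add, Pi.add_apply]
  have key : σr i (algebraMap (𝓞 K) K (α * β)) =
      a i - e i * ((gsub : mixedEmbedding.mixedSpace K) + v).1 (E i) := by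
    rw [← hE i, map_mul, map_mul]
    have hmul : (mixedEmbedding K (algebraMap (𝓞 K) K α) *
        mixedEmbedding K (algebraMap (𝓞 K) K β)).1 (E i)
        = (mixedEmbedding K (algebraMap (𝓞 K) K α)).1 (E i) *
          (mixedEmbedding K (algebraMap (𝓞 K) K β)).1 (E i) := rfl
    rw [hmul, hβ', hneg, hv1, hE i]
    have hee : (σr i) ((algebraMap (𝓞 K) K) α) = e i := rfl
    rw [hee]
    field_simp [he0 i]
  have hcomp : |((gsub : mixedEmbedding.mixedSpace K) + v).1 (E i)| ≤ M := by
    refine le_trans ?_ hFnorm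
    calc |((gsub : mixedEmbedding.mixedSpace K) + v).1 (E i)|
        ≤ ‖((gsub : mixedEmbedding.mixedSpace K) + v).1‖ := by
          simpa [Real.norm_eq_abs] using
            norm_le_pi_norm ((gsub : mixedEmbedding.mixedSpace K) + v).1 (E i)
      _ ≤ ‖(gsub : mixedEmbedding.mixedSpace K) + v‖ := norm_fst_le _
  have hei : |e i| < δ := by
    have h1 : InfinitePlace.embedding_of_isReal (E i).2 (algebraMap (𝓞 K) K α) = e i :=
      Eq.trans (mixedEmbedding.mixedEmbedding_apply_isReal (K := K) (x := algebraMap (𝓞 K) K α) (w := E i)).symm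
        (hE i _)
    have h2 := hαlt (E i).1 (E i).2
    rwa [← InfinitePlace.norm_embedding_of_isReal (E i).2, h1, Real.norm_eq_abs] at h2
  have habs : dist (a i) (σr i (algebraMap (𝓞 K) K (α * β)))
      = |e i * ((gsub : mixedEmbedding.mixedSpace K) + v).1 (E i)| := by
    rw [key, Real.dist_eq]
    congr 1
    ring
  rw [habs, abs_mul]
  calc |e i| * |((gsub : mixedEmbedding.mixedSpace K) + v).1 (E i)|
      ≤ δ * M := mul_le_mul hei.le hcomp (abs_nonneg _) hδ.le
    _ < δ * (M + 1) := by nlinarith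
    _ = ε := by
        rw [hδdef]
        field_simp
end

section
/- Let K be a number field and let V₁ be the product of some but not all archimedean completions of K. Then the image of the ring of integers O_K under the natural diagonal embedding into V₁ is dense in V₁. -/
open NumberField Module Submodule

/-- The largest `ℝ`-submodule contained in an additive subgroup `H`. -/
private def maxSubmodule {E : Type*} [NormedAddCommGroup E] [NormedSpace ℝ E]
    (H : AddSubgroup E) : Submodule ℝ E where
  carrier := {x | ∀ t : ℝ, t • x ∈ H}
  add_mem' := fun hx hy t => by simpa [smul_add] using H.add_mem (hx t) (hy t)
  zero_mem' := fun t => by simpa using H.zero_mem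
  smul_mem' := fun c x hx t => by simpa [smul_smul] using hx (t * c)

private theorem mem_maxSubmodule {E : Type*} [NormedAddCommGroup E] [NormedSpace ℝ E]
    (H : AddSubgroup E) {x : E} : x ∈ maxSubmodule H ↔ ∀ t : ℝ, t • x ∈ H := Iff.rfl

private theorem maxSubmodule_le {E : Type*} [NormedAddCommGroup E] [NormedSpace ℝ E]
    (H : AddSubgroup E) {x : E} (hx : x ∈ maxSubmodule H) : x ∈ H := by
  simpa using (mem_maxSubmodule H).1 hx 1

/-- Key structural fact: near `0`, a closed subgroup of a finite dimensional real
vector space is contained in its maximal subspace. -/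
private theorem exists_isolation {E : Type*} [NormedAddCommGroup E] [NormedSpace ℝ E]
    [FiniteDimensional ℝ E] (H : AddSubgroup E) (hH : IsClosed (H : Set E)) :
    ∃ ε > 0, ∀ h ∈ H, ‖h‖ < ε → h ∈ maxSubmodule H := by
  by_contra hcon
  push_neg at hcon
  set W := maxSubmodule H with hW
  obtain ⟨W', hc⟩ := Submodule.exists_isCompl W
  -- sequence of small elements of `H` not in `W`
  have hseq : ∀ n : ℕ, ∃ h ∈ H, ‖h‖ < 1 / (n + 1) ∧ h ∉ W := by
    intro n
    obtain ⟨h, hh, hlt, hnW⟩ := hcon (1 / (n + 1)) (by positivity)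
    exact ⟨h, hh, hlt, hnW⟩
  choose h hhH hhlt hhnW using hseq
  have hh0 : Filter.Tendsto h Filter.atTop (nhds 0) := by
    rw [tendsto_zero_iff_norm_tendsto_zero]
    refine squeeze_zero (fun n => norm_nonneg _) (fun n => (hhlt n).le) ?_
    exact tendsto_one_div_add_atTop_nhds_zero_nat
  -- projection onto `W'` along `W`
  set q : E →ₗ[ℝ] E := W'.subtype ∘ₗ (W'.projectionOnto W hc.symm) with hq
  have hq_cont : Continuous q := q.continuous_of_finiteDimensional
  have hq_memW' : ∀ x, q x ∈ W' := fun x => (W'.projectionOnto W hc.symm x).2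
  have hq_zero : ∀ x, q x = 0 ↔ x ∈ W := by
    intro x
    rw [hq, LinearMap.comp_apply, Submodule.coe_subtype, Submodule.coe_eq_zero,
      Submodule.projectionOnto_apply_eq_zero_iff]
  have hq_sub : ∀ x, x - q x ∈ W := by
    intro x
    have h0 := Submodule.projection_add_projection_eq_self hc x
    have h2 : x - q x = (W.projectionOnto W' hc x : E) := by
      have hqx : q x = (W'.projectionOnto W hc.symm x : E) := rfl
      rw [hqx, sub_eq_iff_eq_add]; exact h0.symm
    rw [h2]; exact (W.projectionOnto W' hc x).2
  set g : ℕ → E := fun n => q (h n) with hg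
  have hgH : ∀ n, g n ∈ H := by
    intro n
    have h3 : g n = h n - (h n - q (h n)) := by rw [hg]; simp
    rw [h3]
    exact H.sub_mem (hhH n) (maxSubmodule_le H (hq_sub (h n)))
  have hgW' : ∀ n, g n ∈ W' := fun n => hq_memW' (h n)
  have hgne : ∀ n, g n ≠ 0 := fun n hg0 => hhnW n ((hq_zero (h n)).1 hg0)
  have hg0 : Filter.Tendsto g Filter.atTop (nhds 0) := by
    have h4 := (hq_cont.tendsto 0).comp hh0
    simpa [hg, Function.comp_def, map_zero] using h4
  have hcpos : ∀ n, (0:ℝ) < ‖g n‖ := fun n => norm_pos_iff.2 (hgne n)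
  have hc0 : Filter.Tendsto (fun n => ‖g n‖) Filter.atTop (nhds 0) := by
    simpa using hg0.norm
  set u : ℕ → E := fun n => ‖g n‖⁻¹ • g n with hu
  have husph : ∀ n, u n ∈ Metric.sphere (0 : E) 1 := by
    intro n
    simp only [Metric.mem_sphere, dist_zero_right, hu, norm_smul, norm_inv, norm_norm]
    rw [inv_mul_cancel₀ (hcpos n).ne']
  obtain ⟨u₀, hu₀sph, φ, hφ, hconv⟩ :=
    (isCompact_sphere (0 : E) 1).tendsto_subseq husph
  have hu₀norm : ‖u₀‖ = 1 := by simpa using hu₀sph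
  -- `u₀ ∈ W`
  have hu₀W : u₀ ∈ W := by
    rw [hW, mem_maxSubmodule]
    intro t
    have hcφ : Filter.Tendsto (fun n => ‖g (φ n)‖) Filter.atTop (nhds 0) :=
      hc0.comp hφ.tendsto_atTop
    have hscal : Filter.Tendsto (fun n => (⌊t / ‖g (φ n)‖⌋ : ℝ) * ‖g (φ n)‖) Filter.atTop
        (nhds t) := by
      have hle : ∀ n, (⌊t / ‖g (φ n)‖⌋ : ℝ) * ‖g (φ n)‖ ≤ t := by
        intro n
        have h5 := Int.floor_le (t / ‖g (φ n)‖)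
        calc (⌊t / ‖g (φ n)‖⌋ : ℝ) * ‖g (φ n)‖ ≤ (t / ‖g (φ n)‖) * ‖g (φ n)‖ :=
              mul_le_mul_of_nonneg_right h5 (hcpos (φ n)).le
          _ = t := div_mul_cancel₀ t (hcpos (φ n)).ne'
      have hge : ∀ n, t - ‖g (φ n)‖ ≤ (⌊t / ‖g (φ n)‖⌋ : ℝ) * ‖g (φ n)‖ := by
        intro n
        have h1 : t / ‖g (φ n)‖ - 1 ≤ (⌊t / ‖g (φ n)‖⌋ : ℝ) := (Int.sub_one_lt_floor _).le
        have h6 := mul_le_mul_of_nonneg_right h1 (hcpos (φ n)).le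
        calc t - ‖g (φ n)‖ = (t / ‖g (φ n)‖ - 1) * ‖g (φ n)‖ := by
              rw [sub_mul, div_mul_cancel₀ t (hcpos (φ n)).ne', one_mul]
          _ ≤ (⌊t / ‖g (φ n)‖⌋ : ℝ) * ‖g (φ n)‖ := h6
      refine tendsto_of_tendsto_of_tendsto_of_le_of_le ?_ ?_ hge hle
      · simpa using (tendsto_const_nhds (x := t)).sub hcφ
      · exact tendsto_const_nhds
    have huconv : Filter.Tendsto (fun n => u (φ n)) Filter.atTop (nhds u₀) := hconv
    have h7 := hscal.smul huconv
    have hfun : ∀ n, ((⌊t / ‖g (φ n)‖⌋ : ℝ) * ‖g (φ n)‖) • u (φ n)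
        = (⌊t / ‖g (φ n)‖⌋ : ℝ) • g (φ n) := by
      intro n
      rw [mul_smul]
      congr 1
      show ‖g (φ n)‖ • (‖g (φ n)‖⁻¹ • g (φ n)) = g (φ n)
      rw [smul_smul, mul_inv_cancel₀ (hcpos (φ n)).ne', one_smul]
    have key : Filter.Tendsto (fun n => (⌊t / ‖g (φ n)‖⌋ : ℝ) • g (φ n)) Filter.atTop
        (nhds (t • u₀)) := h7.congr hfun
    refine hH.mem_of_tendsto key (Filter.Eventually.of_forall fun n => ?_)
    have h8 : (⌊t / ‖g (φ n)‖⌋ : ℝ) • g (φ n) = ⌊t / ‖g (φ n)‖⌋ • g (φ n) :=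
      Int.cast_smul_eq_zsmul ℝ _ _
    rw [h8]
    exact AddSubgroup.zsmul_mem H (hgH (φ n)) _
  have hu₀W' : u₀ ∈ W' := by
    have hclosed : IsClosed (W' : Set E) := Submodule.closed_of_finiteDimensional W'
    refine hclosed.mem_of_tendsto hconv (Filter.Eventually.of_forall fun n => ?_)
    exact W'.smul_mem _ (hgW' (φ n))
  have h9 : u₀ = 0 := by
    have := Submodule.disjoint_def.1 hc.disjoint u₀ hu₀W hu₀W'
    simpa using this
  rw [h9] at hu₀norm
  simp at hu₀norm

private theorem discrete_of_isolation {E : Type*} [NormedAddCommGroup E]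
    (Γ : Submodule ℤ E) {ε : ℝ} (hε : 0 < ε) (hiso : ∀ x ∈ Γ, ‖x‖ < ε → x = 0) :
    DiscreteTopology Γ := by
  refine discreteTopology_iff_isOpen_singleton_zero.mpr ⟨Metric.ball 0 ε, Metric.isOpen_ball, ?_⟩
  ext x
  rw [Set.mem_preimage, mem_ball_zero_iff, Set.mem_singleton_iff]
  constructor
  · intro hx
    exact Subtype.ext (hiso x.1 x.2 hx)
  · rintro rfl
    simpa using hε

private theorem finrank_eq_finrank_span_of_discrete {E : Type*} [NormedAddCommGroup E]
    [NormedSpace ℝ E] [FiniteDimensional ℝ E] (Γ : Submodule ℤ E) [DiscreteTopology Γ] :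
    finrank ℤ Γ = finrank ℝ (span ℝ (Γ : Set E)) := by
  set F := span ℝ (Γ : Set E) with hF
  set f := F.subtype with hf
  set Γ₀ := Γ.comap (f.restrictScalars ℤ) with hΓ₀
  have h_le : Γ ≤ LinearMap.range (f.restrictScalars ℤ) := by
    intro x hx
    exact LinearMap.mem_range.mpr ⟨⟨x, Submodule.subset_span hx⟩, rfl⟩
  have h_img : Submodule.map (f.restrictScalars ℤ) Γ₀ = Γ :=
    Submodule.map_comap_eq_self h_le
  have hdisc : DiscreteTopology Γ₀ := by
    refine DiscreteTopology.preimage_of_continuous_injective (Γ : Set E) ?_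
      (Submodule.injective_subtype _)
    exact LinearMap.continuous_of_finiteDimensional f
  have hlat : IsZLattice ℝ Γ₀ := ⟨by
    rw [← (Submodule.map_injective_of_injective (Submodule.injective_subtype F)).eq_iff,
      Submodule.map_span, Submodule.map_top, Submodule.range_subtype]
    have : f '' Γ₀ = (Γ : Set E) := by
      rw [show (f '' Γ₀ : Set E) = ((Γ₀.map (f.restrictScalars ℤ) : Submodule ℤ E) : Set E) by
        rw [Submodule.map_coe]; rfl, h_img]
    rw [this, hF]⟩
  have h1 : finrank ℤ Γ₀ = finrank ℝ F := ZLattice.rank ℝ Γ₀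
  have h2 : finrank ℤ Γ = finrank ℤ Γ₀ := by
    have e := Submodule.equivMapOfInjective (f.restrictScalars ℤ)
      (Submodule.injective_subtype F) Γ₀
    rw [h_img] at e
    exact (LinearEquiv.finrank_eq e).symm
  rw [h2, h1]

open NumberField.mixedEmbedding in
/-- The subspace of the mixed space consisting of points vanishing at all places in `S`. -/
private noncomputable def sVanish (K : Type*) [Field K] [NumberField K] (S : Set (InfinitePlace K)) :
    Submodule ℝ (mixedSpace K) where
  carrier := {x | (∀ w : {w : InfinitePlace K // w.IsReal}, w.1 ∈ S → x.1 w = 0) ∧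
    (∀ w : {w : InfinitePlace K // w.IsComplex}, w.1 ∈ S → x.2 w = 0)}
  add_mem' := by
    rintro x y ⟨hx1, hx2⟩ ⟨hy1, hy2⟩
    constructor
    · intro w hw; simp [Prod.fst_add, Pi.add_apply, hx1 w hw, hy1 w hw]
    · intro w hw; simp [Prod.snd_add, Pi.add_apply, hx2 w hw, hy2 w hw]
  zero_mem' := ⟨fun _ _ => rfl, fun _ _ => rfl⟩
  smul_mem' := by
    rintro c x ⟨hx1, hx2⟩
    constructor
    · intro w hw; simp [Prod.smul_fst, Pi.smul_apply, hx1 w hw]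
    · intro w hw; simp [Prod.smul_snd, Pi.smul_apply, hx2 w hw]

open NumberField.mixedEmbedding in
private theorem sVanish_mul (K : Type*) [Field K] [NumberField K] (S : Set (InfinitePlace K))
    {v : mixedSpace K} (hv : v ∈ sVanish K S) (m : mixedSpace K) : v * m ∈ sVanish K S := by
  obtain ⟨hv1, hv2⟩ := hv
  constructor
  · intro w hw
    show (v.1 * m.1) w = 0
    rw [Pi.mul_apply, hv1 w hw, zero_mul]
  · intro w hw
    show (v.2 * m.2) w = 0
    rw [Pi.mul_apply, hv2 w hw, zero_mul]

set_option synthInstance.maxHeartbeats 1000000 in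
set_option maxHeartbeats 1000000 in
open NumberField.mixedEmbedding Classical in
private theorem main_aux (K : Type*) [Field K] [NumberField K]
    (S : Set (InfinitePlace K)) (hS' : S ≠ Set.univ) (y : mixedSpace K)
    {ε : ℝ} (hε : 0 < ε) :
    ∃ (ξ : 𝓞 K) (v : mixedSpace K), v ∈ sVanish K S ∧
      ‖mixedEmbedding K (algebraMap (𝓞 K) K ξ) + v - y‖ < ε := by
  classical
  set G : AddSubgroup (mixedSpace K) :=
    ((mixedEmbedding.integerLattice K).toAddSubgroup ⊔ (sVanish K S).toAddSubgroup) with hG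
  set H : AddSubgroup (mixedSpace K) := G.topologicalClosure with hH
  have hHclosed : IsClosed (H : Set (mixedSpace K)) := G.isClosed_topologicalClosure
  have hmemL : ∀ x : mixedSpace K, x ∈ mixedEmbedding.integerLattice K ↔
      ∃ ξ : 𝓞 K, mixedEmbedding K (algebraMap (𝓞 K) K ξ) = x := fun x => Iff.rfl
  -- `G` is stable under multiplication by images of integers
  have hGmul : ∀ x ∈ G, ∀ η : 𝓞 K,
      x * mixedEmbedding K (algebraMap (𝓞 K) K η) ∈ G := by
    intro x hx η
    rw [hG, AddSubgroup.mem_sup] at hx ⊢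
    obtain ⟨l, hl, v, hv, rfl⟩ := hx
    refine ⟨l * mixedEmbedding K (algebraMap (𝓞 K) K η), ?_,
      v * mixedEmbedding K (algebraMap (𝓞 K) K η), ?_, by rw [add_mul]⟩
    · obtain ⟨ξ, rfl⟩ := (hmemL l).1 hl
      refine (hmemL _).2 ⟨ξ * η, ?_⟩
      rw [map_mul, map_mul]
    · exact sVanish_mul K S hv _
  have hHmul : ∀ x ∈ H, ∀ η : 𝓞 K,
      x * mixedEmbedding K (algebraMap (𝓞 K) K η) ∈ H := by
    intro x hx η
    set m := mixedEmbedding K (algebraMap (𝓞 K) K η)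
    have hx' : x ∈ closure (G : Set (mixedSpace K)) := hx
    have h1 : x * m ∈ closure ((fun z => z * m) '' (G : Set (mixedSpace K))) :=
      image_closure_subset_closure_image (continuous_mul_right m)
        (Set.mem_image_of_mem _ hx')
    refine closure_mono ?_ h1
    rintro _ ⟨z, hz, rfl⟩
    exact hGmul z hz η
  set W := maxSubmodule H with hW
  have hWmul : ∀ x ∈ W, ∀ η : 𝓞 K,
      x * mixedEmbedding K (algebraMap (𝓞 K) K η) ∈ W := by
    intro x hx η
    rw [hW, mem_maxSubmodule]
    intro t
    have h5 : t • (x * mixedEmbedding K (algebraMap (𝓞 K) K η))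
        = (t • x) * mixedEmbedding K (algebraMap (𝓞 K) K η) :=
      (smul_mul_assoc t x _).symm
    rw [h5]
    exact hHmul _ (hx t) η
  have hGleH : G ≤ H := G.le_topologicalClosure
  have hV2W : sVanish K S ≤ W := by
    intro v hv
    rw [hW, mem_maxSubmodule]
    intro t
    exact hGleH ((AddSubgroup.mem_sup).2
      ⟨0, (AddSubgroup.zero_mem _), t • v, (sVanish K S).smul_mem t hv, zero_add _⟩)
  have hLH : ∀ l ∈ mixedEmbedding.integerLattice K, l ∈ H := by
    intro l hl
    exact hGleH ((AddSubgroup.mem_sup).2 ⟨l, hl, 0, (AddSubgroup.zero_mem _), add_zero _⟩)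
  -- a nonzero element of `sVanish K S`
  obtain ⟨w₀, hw₀⟩ : ∃ w : InfinitePlace K, w ∉ S := by
    by_contra hcon
    push_neg at hcon
    exact hS' (Set.eq_univ_of_forall hcon)
  have hWne : W ≠ ⊥ := by
    rcases w₀.isReal_or_isComplex with hre | hco
    · intro hbot
      have hmem : ((Pi.single ⟨w₀, hre⟩ 1, 0) : mixedSpace K) ∈ sVanish K S := by
        refine ⟨fun w hw => ?_, fun w hw => rfl⟩
        have hne : w ≠ ⟨w₀, hre⟩ := fun h => hw₀ (by rw [h] at hw; exact hw)
        exact Pi.single_eq_of_ne hne 1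
      have := hV2W hmem
      rw [hbot, Submodule.mem_bot] at this
      have := congrFun (congrArg Prod.fst this) ⟨w₀, hre⟩
      simpa using this
    · intro hbot
      have hmem : ((0, Pi.single ⟨w₀, hco⟩ 1) : mixedSpace K) ∈ sVanish K S := by
        refine ⟨fun w hw => rfl, fun w hw => ?_⟩
        have hne : w ≠ ⟨w₀, hco⟩ := fun h => hw₀ (by rw [h] at hw; exact hw)
        exact Pi.single_eq_of_ne hne 1
      have := hV2W hmem
      rw [hbot, Submodule.mem_bot] at this
      have := congrFun (congrArg Prod.snd this) ⟨w₀, hco⟩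
      simpa using this
  -- there is a nonzero lattice point in `W`
  obtain ⟨ε₀, hε₀, hiso⟩ := exists_isolation H hHclosed
  have claim : ∃ ξ₀ : 𝓞 K,
      mixedEmbedding K (algebraMap (𝓞 K) K ξ₀) ≠ 0 ∧
      mixedEmbedding K (algebraMap (𝓞 K) K ξ₀) ∈ W := by
    by_contra hcl
    push_neg at hcl
    have hLW : ∀ x ∈ mixedEmbedding.integerLattice K, x ∈ W → x = 0 := by
      intro x hx hxW
      obtain ⟨ξ, rfl⟩ := (hmemL x).1 hx
      by_contra hne
      exact hcl ξ hne hxW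
    obtain ⟨W', hc⟩ := Submodule.exists_isCompl W
    set q : mixedSpace K →ₗ[ℝ] mixedSpace K :=
      W'.subtype ∘ₗ W'.projectionOnto W hc.symm with hq
    have hq_memW' : ∀ x, q x ∈ W' := fun x => (W'.projectionOnto W hc.symm x).2
    have hq_zero : ∀ x, q x = 0 ↔ x ∈ W := by
      intro x
      rw [hq, LinearMap.comp_apply, Submodule.coe_subtype, Submodule.coe_eq_zero,
        Submodule.projectionOnto_apply_eq_zero_iff]
    have hq_sub : ∀ x, x - q x ∈ W := by
      intro x
      have h0 := Submodule.projection_add_projection_eq_self hc x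
      have h2 : x - q x = (W.projectionOnto W' hc x : mixedSpace K) := by
        have hqx : q x = (W'.projectionOnto W hc.symm x : mixedSpace K) := rfl
        rw [hqx, sub_eq_iff_eq_add]; exact h0.symm
      rw [h2]; exact (W.projectionOnto W' hc x).2
    set Γ : Submodule ℤ (mixedSpace K) :=
      Submodule.map (q.restrictScalars ℤ) (mixedEmbedding.integerLattice K) with hΓ
    have hiso' : ∀ x ∈ Γ, ‖x‖ < ε₀ → x = 0 := by
      rintro x hx hnorm
      obtain ⟨l, hl, rfl⟩ := hx
      show q l = 0
      have hnorm' : ‖q l‖ < ε₀ := hnorm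
      have hqlH : q l ∈ H := by
        have h3 : q l = l - (l - q l) := by abel
        rw [h3]
        exact H.sub_mem (hLH l hl) (maxSubmodule_le H (hq_sub l))
      have h4 : q l ∈ W := hiso _ hqlH hnorm'
      exact Submodule.disjoint_def.1 hc.disjoint _ h4 (hq_memW' l)
    haveI hΓdisc : DiscreteTopology Γ := discrete_of_isolation Γ hε₀ hiso'
    -- rank computations
    have hrank1 : finrank ℤ (mixedEmbedding.integerLattice K) = finrank ℝ (mixedSpace K) :=
      ZLattice.rank ℝ (mixedEmbedding.integerLattice K)
    set g : (mixedEmbedding.integerLattice K) →ₗ[ℤ] mixedSpace K :=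
      (q.restrictScalars ℤ) ∘ₗ (mixedEmbedding.integerLattice K).subtype with hgdef
    have hginj : Function.Injective g := by
      rw [← LinearMap.ker_eq_bot, LinearMap.ker_eq_bot']
      rintro ⟨l, hl⟩ hgl
      have hql : q l = 0 := hgl
      have hlW : l ∈ W := (hq_zero l).1 hql
      exact Subtype.ext (hLW l hl hlW)
    have hrange : LinearMap.range g = Γ := by
      rw [hgdef, LinearMap.range_comp, Submodule.range_subtype]
    have hrank2 : finrank ℤ (mixedEmbedding.integerLattice K) = finrank ℤ Γ := by
      rw [← hrange]
      exact LinearEquiv.finrank_eq (LinearEquiv.ofInjective g hginj)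
    have hrank3 : finrank ℤ Γ = finrank ℝ (Submodule.span ℝ (Γ : Set (mixedSpace K))) :=
      finrank_eq_finrank_span_of_discrete Γ
    have hspanle : Submodule.span ℝ (Γ : Set (mixedSpace K)) ≤ W' := by
      rw [Submodule.span_le]
      rintro x ⟨l, hl, rfl⟩
      exact hq_memW' l
    have hlt : finrank ℝ (Submodule.span ℝ (Γ : Set (mixedSpace K))) < finrank ℝ (mixedSpace K) := by
      refine lt_of_le_of_lt (Submodule.finrank_mono hspanle) ?_
      refine Submodule.finrank_lt ?_
      intro htop
      apply hWne
      have := hc.disjoint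
      rw [htop, disjoint_top] at this
      exact this
    rw [hrank1, hrank2, hrank3] at *
    omega
  -- conclude that `W = ⊤`
  obtain ⟨ξ₀, hξ₀ne, hξ₀W⟩ := claim
  have hWtop : W = ⊤ := by
    rw [eq_top_iff]
    intro z _
    set m₀ := mixedEmbedding K (algebraMap (𝓞 K) K ξ₀) with hm₀
    have hall : ∀ x : mixedSpace K, m₀ * x ∈ W := by
      have hsub : (mixedEmbedding.integerLattice K : Set (mixedSpace K)) ⊆
          ↑(W.comap (LinearMap.mulLeft ℝ m₀)) := by
        intro l hl
        obtain ⟨η, rfl⟩ := (hmemL l).1 hl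
        have h6 : LinearMap.mulLeft ℝ m₀ (mixedEmbedding K (algebraMap (𝓞 K) K η))
            = m₀ * mixedEmbedding K (algebraMap (𝓞 K) K η) := rfl
        show m₀ * mixedEmbedding K (algebraMap (𝓞 K) K η) ∈ W
        exact hWmul m₀ hξ₀W η
      have hspan : Submodule.span ℝ (mixedEmbedding.integerLattice K : Set (mixedSpace K))
          ≤ W.comap (LinearMap.mulLeft ℝ m₀) := Submodule.span_le.2 hsub
      have htop : Submodule.span ℝ (mixedEmbedding.integerLattice K : Set (mixedSpace K)) = ⊤ :=
        (inferInstance : IsZLattice ℝ (mixedEmbedding.integerLattice K)).span_top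
      intro x
      have hx' : x ∈ Submodule.span ℝ (mixedEmbedding.integerLattice K : Set (mixedSpace K)) := by
        rw [htop]; exact Submodule.mem_top
      exact hspan hx'
    -- `m₀` is invertible, so multiplication by `m₀` is surjective
    have hξK : algebraMap (𝓞 K) K ξ₀ ≠ 0 := by
      intro h7
      apply hξ₀ne
      rw [hm₀, h7, map_zero]
    have hcoord1 : ∀ w : {w : InfinitePlace K // w.IsReal}, m₀.1 w ≠ 0 := by
      intro w
      rw [hm₀, mixedEmbedding_apply_isReal]
      exact map_ne_zero _ |>.2 hξK
    have hcoord2 : ∀ w : {w : InfinitePlace K // w.IsComplex}, m₀.2 w ≠ 0 := by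
      intro w
      rw [hm₀, mixedEmbedding_apply_isComplex]
      exact map_ne_zero _ |>.2 hξK
    set minv : mixedSpace K := (fun w => (m₀.1 w)⁻¹, fun w => (m₀.2 w)⁻¹) with hminv
    have hmul1 : m₀ * minv = 1 := by
      rw [hminv, Prod.ext_iff]
      constructor
      · funext w
        show m₀.1 w * (m₀.1 w)⁻¹ = 1
        exact mul_inv_cancel₀ (hcoord1 w)
      · funext w
        show m₀.2 w * (m₀.2 w)⁻¹ = 1
        exact mul_inv_cancel₀ (hcoord2 w)
    have hz : z = m₀ * (minv * z) := by
      rw [← mul_assoc, hmul1, one_mul]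
    rw [hz]
    exact hall _
  -- hence `H = ⊤` and `y` is approximable
  have hyH : y ∈ closure (G : Set (mixedSpace K)) := by
    have : y ∈ W := by rw [hWtop]; exact Submodule.mem_top
    exact maxSubmodule_le H this
  obtain ⟨z, hzG, hdz⟩ := Metric.mem_closure_iff.1 hyH ε hε
  obtain ⟨l, hl, v, hv, rfl⟩ := (AddSubgroup.mem_sup).1 hzG
  obtain ⟨ξ, rfl⟩ := (hmemL l).1 hl
  refine ⟨ξ, v, hv, ?_⟩
  rw [show mixedEmbedding K (algebraMap (𝓞 K) K ξ) + v - y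
      = -(y - (mixedEmbedding K (algebraMap (𝓞 K) K ξ) + v)) by abel, norm_neg, ← dist_eq_norm]
  exact hdz


set_option synthInstance.maxHeartbeats 1000000
set_option maxHeartbeats 1000000
open NumberField.InfinitePlace NumberField.mixedEmbedding Classical

/-- Let `K` be a number field and let `V₁ = Π_{v ∈ S} K_v` be the product of
some (`S` nonempty) but not all (`S ≠ univ`) archimedean completions of `K` (completions at
infinite places).  Then the image of the ring of integers `𝓞 K` under the diagonal embedding
into `V₁` is dense. -/
theorem ot_integers_dense_in_some_archimedean_completions
    (K : Type*) [Field K] [NumberField K]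
    (S : Set (InfinitePlace K)) (hS : S.Nonempty) (hS' : S ≠ Set.univ) :
    DenseRange (fun ξ : 𝓞 K =>
      (fun v : S => algebraMap K v.1.1.Completion (algebraMap (𝓞 K) K ξ) :
        (v : S) → v.1.1.Completion)) := by
  classical
  haveI : Fintype ↥S := Set.Finite.fintype S.toFinite
  rw [Metric.denseRange_iff]
  intro x ε hε
  have hε3 : 0 < ε / 3 := by positivity
  -- approximate each coordinate by an element of `K`
  have hdense : ∀ v : ↥S, ∃ kv : WithAbs v.1.1, dist (x v) (↑kv : v.1.1.Completion) < ε / 3 :=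
    fun v => Metric.denseRange_iff.1 UniformSpace.Completion.denseRange_coe (x v) (ε/3) hε3
  choose k hk using hdense
  set xK : ↥S → K := fun v => WithAbs.equiv v.1.1 (k v) with hxK
  -- target point in the mixed space
  set y : mixedSpace K :=
    (fun w => if h : w.1 ∈ S then embedding_of_isReal w.2 (xK ⟨w.1, h⟩) else 0,
     fun w => if h : w.1 ∈ S then w.1.embedding (xK ⟨w.1, h⟩) else 0) with hy
  obtain ⟨ξ, v', hv', hnorm⟩ := main_aux K S hS' y hε3
  refine ⟨ξ, ?_⟩
  rw [dist_pi_lt_iff hε]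
  intro v
  set z : mixedSpace K := mixedEmbedding K (algebraMap (𝓞 K) K ξ) + v' - y with hz
  -- the distance at the place `v` is controlled by `‖z‖`
  have hcoord : v.1 (algebraMap (𝓞 K) K ξ - xK v) < ε / 3 := by
    rcases v.1.isReal_or_isComplex with hre | hco
    · have h1 : z.1 ⟨v.1, hre⟩ = embedding_of_isReal hre (algebraMap (𝓞 K) K ξ)
          - embedding_of_isReal hre (xK v) := by
        rw [hz]
        show (mixedEmbedding K (algebraMap (𝓞 K) K ξ)).1 ⟨v.1, hre⟩ + v'.1 ⟨v.1, hre⟩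
            - y.1 ⟨v.1, hre⟩ = _
        rw [mixedEmbedding_apply_isReal, hv'.1 ⟨v.1, hre⟩ v.2, hy]
        simp only [dif_pos v.2]
        rw [add_zero]
      have h2 : ‖z.1 ⟨v.1, hre⟩‖ ≤ ‖z‖ :=
        le_trans (norm_le_pi_norm z.1 ⟨v.1, hre⟩) (norm_fst_le z)
      calc v.1 (algebraMap (𝓞 K) K ξ - xK v)
          = ‖embedding_of_isReal hre (algebraMap (𝓞 K) K ξ - xK v)‖ :=
            (norm_embedding_of_isReal hre _).symm
        _ = ‖z.1 ⟨v.1, hre⟩‖ := by rw [map_sub, h1]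
        _ ≤ ‖z‖ := h2
        _ < ε / 3 := hnorm
    · have h1 : z.2 ⟨v.1, hco⟩ = v.1.embedding (algebraMap (𝓞 K) K ξ)
          - v.1.embedding (xK v) := by
        rw [hz]
        show (mixedEmbedding K (algebraMap (𝓞 K) K ξ)).2 ⟨v.1, hco⟩ + v'.2 ⟨v.1, hco⟩
            - y.2 ⟨v.1, hco⟩ = _
        rw [mixedEmbedding_apply_isComplex, hv'.2 ⟨v.1, hco⟩ v.2, hy]
        simp only [dif_pos v.2]
        rw [add_zero]
      have h2 : ‖z.2 ⟨v.1, hco⟩‖ ≤ ‖z‖ :=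
        le_trans (norm_le_pi_norm z.2 ⟨v.1, hco⟩) (norm_snd_le z)
      calc v.1 (algebraMap (𝓞 K) K ξ - xK v)
          = ‖v.1.embedding (algebraMap (𝓞 K) K ξ - xK v)‖ := (norm_embedding_eq v.1 _).symm
        _ = ‖z.2 ⟨v.1, hco⟩‖ := by rw [map_sub, h1]
        _ ≤ ‖z‖ := h2
        _ < ε / 3 := hnorm
  -- now conclude by the triangle inequality in the completion
  set ξW : WithAbs v.1.1 := (WithAbs.equiv v.1.1).symm (algebraMap (𝓞 K) K ξ) with hξW
  have hcast : algebraMap K v.1.1.Completion (algebraMap (𝓞 K) K ξ)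
      = (↑ξW : v.1.1.Completion) := rfl
  have hdist2 : dist ((↑(k v) : v.1.1.Completion))
      (algebraMap K v.1.1.Completion (algebraMap (𝓞 K) K ξ)) < ε / 3 := by
    rw [hcast, UniformSpace.Completion.dist_eq]
    have h9 : dist (k v) ξW = v.1 (algebraMap (𝓞 K) K ξ - xK v) := by
      rw [dist_eq_norm]
      rw [show ‖k v - ξW‖ = v.1.1 (xK v - algebraMap (𝓞 K) K ξ) from rfl]
      rw [v.1.1.map_sub]
      rfl
    rw [h9]
    exact hcoord
  calc dist (x v) (algebraMap K v.1.1.Completion (algebraMap (𝓞 K) K ξ))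
      ≤ dist (x v) (↑(k v) : v.1.1.Completion)
        + dist ((↑(k v) : v.1.1.Completion)) (algebraMap K v.1.1.Completion (algebraMap (𝓞 K) K ξ)) :=
        dist_triangle _ _ _
    _ < ε / 3 + ε / 3 := add_lt_add (hk v) hdist2
    _ < ε := by linarith
end

section
/- Let K be a number field of degree n = s + 2t, t > 0, with s real embeddings, and let O_K act on ℍ^s × ℂ^t by translations T_a(z_i) = z_i + σ_i(a). Fix (t₁,…,t_s) ∈ ℍ^s and set T = {z : z_i = t_i for i ≤ s}. Then the closure of the orbit O_K · T equals Z = {z : Im z_i = Im t_i for i ≤ s}. -/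
open NumberField

noncomputable section

/-- The combined embedding. -/
def otEmb {K : Type*} [Field K] {s t : ℕ}
    (σr : Fin s → (K →+* ℝ)) (σc : Fin t → (K →+* ℂ)) (i : Fin (s + t)) (x : K) : ℂ :=
  Fin.addCases (motive := fun _ => ℂ) (fun i₀ => (σr i₀ x : ℂ)) (fun j₀ => σc j₀ x) i

/-- Translation part of the OT action: `T_a(z)ᵢ = zᵢ + σᵢ(a)`. -/
def otT {K : Type*} [Field K] [NumberField K] {s t : ℕ}
    (σr : Fin s → (K →+* ℝ)) (σc : Fin t → (K →+* ℂ)) (a : 𝓞 K)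
    (z : Fin (s + t) → ℂ) : Fin (s + t) → ℂ :=
  fun i => z i + otEmb σr σc i (algebraMap (𝓞 K) K a)

/-- The vector of real embeddings applied to an algebraic integer, as an additive hom. -/
def sigmaVec {K : Type*} [Field K] [NumberField K] {s : ℕ}
    (σr : Fin s → (K →+* ℝ)) : 𝓞 K →+ (Fin s → ℝ) where
  toFun a := fun i => σr i (algebraMap (𝓞 K) K a)
  map_zero' := by funext i; simp
  map_add' a b := by funext i; simp

section aux

variable {K : Type*} [Field K] [NumberField K] {s t : ℕ}

lemma aux_small (ht : 0 < t)
    (σr : Fin s → (K →+* ℝ)) (σc : Fin t → (K →+* ℂ))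
    (hnonreal : ∀ j, ∃ x, (σc j x).im ≠ 0)
    {ε : ℝ} (hε : 0 < ε) :
    ∃ a : 𝓞 K, a ≠ 0 ∧ ∀ i : Fin s, |σr i (algebraMap (𝓞 K) K a)| < ε := by
  classical
  set j₀ : Fin t := ⟨0, ht⟩
  set w₀ : InfinitePlace K := InfinitePlace.mk (σc j₀) with hw₀def
  have hw₀ : ¬ w₀.IsReal := by
    rw [hw₀def, InfinitePlace.isReal_mk_iff]
    intro h
    obtain ⟨x, hx⟩ := hnonreal j₀
    have := ComplexEmbedding.isReal_iff.mp h
    have h2 : ComplexEmbedding.conjugate (σc j₀) x = σc j₀ x := by rw [this]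
    rw [ComplexEmbedding.conjugate_coe_eq] at h2
    exact hx (by
      have := congrArg Complex.im h2
      simp [Complex.conj_im] at this
      linarith)
  set εnn : NNReal := ⟨ε, hε.le⟩ with hεnn
  have hεne : εnn ≠ 0 := by
    intro h
    exact hε.ne' (congrArg NNReal.toReal h)
  set B : NNReal := (mixedEmbedding.minkowskiBound K ↑1).toNNReal + 1 with hB
  obtain ⟨g, hg1, hg2⟩ := mixedEmbedding.adjust_f K (f := fun _ => εnn) (w₁ := w₀) B
    (fun w _ => hεne)
  have hvol : mixedEmbedding.minkowskiBound K ↑1 < MeasureTheory.volume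
      (mixedEmbedding.convexBodyLT K g) := by
    rw [mixedEmbedding.convexBodyLT_volume]
    have h1 : mixedEmbedding.minkowskiBound K ↑1 < (B : ENNReal) := by
      rw [hB]
      push_cast
      rw [ENNReal.coe_toNNReal (mixedEmbedding.minkowskiBound_lt_top K ↑1).ne]
      exact ENNReal.lt_add_right (mixedEmbedding.minkowskiBound_lt_top K ↑1).ne one_ne_zero
    refine h1.trans_le ?_
    rw [hg2]
    exact le_mul_of_one_le_left (zero_le)
      (by exact_mod_cast mixedEmbedding.one_le_convexBodyLTFactor K)
  obtain ⟨a, ha0, ha⟩ := mixedEmbedding.exists_ne_zero_mem_ringOfIntegers_lt K hvol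
  refine ⟨a, ha0, fun i => ?_⟩
  set wi : InfinitePlace K := InfinitePlace.mk ((Complex.ofRealHom : ℝ →+* ℂ).comp (σr i))
    with hwi
  have hwiR : wi.IsReal := by
    rw [hwi, InfinitePlace.isReal_mk_iff]
    rw [ComplexEmbedding.isReal_iff]
    ext x
    simp [ComplexEmbedding.conjugate_coe_eq, Complex.conj_ofReal]
  have hne : wi ≠ w₀ := fun h => hw₀ (h ▸ hwiR)
  have := ha wi
  rw [hg1 wi hne] at this
  have happ : wi ((algebraMap (𝓞 K) K) a) = |σr i (algebraMap (𝓞 K) K a)| := by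
    rw [hwi]
    rw [InfinitePlace.apply]
    simp
  rw [happ] at this
  exact this

lemma sigmaVec_apply (σr : Fin s → (K →+* ℝ)) (a : 𝓞 K) (i : Fin s) :
    sigmaVec σr a i = σr i (algebraMap (𝓞 K) K a) := rfl

lemma aux_span (σr : Fin s → (K →+* ℝ)) (hinj : Function.Injective σr) :
    Submodule.span ℝ (Set.range (⇑(sigmaVec σr))) = ⊤ := by
  classical
  by_contra h
  obtain ⟨f, hf0, hfmap⟩ := Submodule.exists_dual_map_eq_bot_of_lt_top
    (lt_top_iff_ne_top.mpr h) inferInstance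
  have hker : ∀ a : 𝓞 K, f (sigmaVec σr a) = 0 := by
    intro a
    have hmem : f (sigmaVec σr a) ∈
        Submodule.map f (Submodule.span ℝ (Set.range (⇑(sigmaVec σr)))) :=
      Submodule.mem_map_of_mem (Submodule.subset_span ⟨a, rfl⟩)
    rw [hfmap] at hmem
    simpa using hmem
  set c : Fin s → ℝ := fun i => f (fun j => if i = j then 1 else 0) with hc
  set ρ : Fin s → (𝓞 K →* ℝ) :=
    fun i => ((σr i).comp (algebraMap (𝓞 K) K)).toMonoidHom with hρ
  have hρinj : Function.Injective ρ := by
    intro i j hij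
    apply hinj
    ext x
    obtain ⟨p, q, hq, hx⟩ := IsFractionRing.div_surjective (A := 𝓞 K) x
    have hp : σr i (algebraMap (𝓞 K) K p) = σr j (algebraMap (𝓞 K) K p) :=
      DFunLike.congr_fun hij p
    have hqq : σr i (algebraMap (𝓞 K) K q) = σr j (algebraMap (𝓞 K) K q) :=
      DFunLike.congr_fun hij q
    rw [← hx, map_div₀, map_div₀, hp, hqq]
  have hli : LinearIndependent ℝ (fun i => ⇑(ρ i)) :=
    (linearIndependent_monoidHom (𝓞 K) ℝ).comp ρ hρinj
  have hrel : ∀ i, c i = 0 := by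
    refine Fintype.linearIndependent_iff.mp hli c ?_
    funext a
    have h1 := hker a
    rw [LinearMap.pi_apply_eq_sum_univ f (sigmaVec σr a)] at h1
    simpa [sigmaVec_apply, hρ, mul_comm, Finset.sum_apply] using h1
  apply hf0
  apply LinearMap.ext
  intro x
  rw [LinearMap.pi_apply_eq_sum_univ f x]
  have h0 : ∀ i : Fin s, (f fun j => if i = j then 1 else 0) = 0 := hrel
  simp [h0]

lemma aux_approx {ι : Type*} [Fintype ι] (u : ι → (Fin s → ℝ))
    (hspan : Submodule.span ℝ (Set.range u) = ⊤) (x : Fin s → ℝ) :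
    ∃ m : ι → ℤ, ‖x - ∑ j, m j • u j‖ ≤ ∑ j, ‖u j‖ := by
  classical
  have hx : x ∈ Submodule.span ℝ (Set.range u) := hspan ▸ Submodule.mem_top
  obtain ⟨c, hc⟩ := (Submodule.mem_span_range_iff_exists_fun ℝ).mp hx
  refine ⟨fun j => ⌊c j⌋, ?_⟩
  have hEq : x - ∑ j, (⌊c j⌋ : ℤ) • u j = ∑ j, Int.fract (c j) • u j := by
    rw [← hc, ← Finset.sum_sub_distrib]
    refine Finset.sum_congr rfl fun j _ => ?_
    rw [← Int.cast_smul_eq_zsmul ℝ, ← sub_smul, Int.fract]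
  rw [hEq]
  refine (norm_sum_le _ _).trans (Finset.sum_le_sum fun j _ => ?_)
  rw [norm_smul]
  have h0 := Int.fract_nonneg (c j)
  have h1 := (Int.fract_lt_one (c j)).le
  calc ‖Int.fract (c j)‖ * ‖u j‖ ≤ 1 * ‖u j‖ := by
        refine mul_le_mul_of_nonneg_right ?_ (norm_nonneg _)
        rw [Real.norm_eq_abs, abs_of_nonneg h0]
        exact h1
    _ = ‖u j‖ := one_mul _

lemma aux_dense (ht : 0 < t)
    (σr : Fin s → (K →+* ℝ)) (hinj : Function.Injective σr)
    (σc : Fin t → (K →+* ℂ)) (hnonreal : ∀ j, ∃ x, (σc j x).im ≠ 0)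
    (x : Fin s → ℝ) {δ : ℝ} (hδ : 0 < δ) :
    ∃ a : 𝓞 K, ∀ i, |σr i (algebraMap (𝓞 K) K a) - x i| < δ := by
  classical
  set ω := RingOfIntegers.basis K with hω
  set ι := Module.Free.ChooseBasisIndex ℤ (𝓞 K) with hι
  set C : ℝ := (∑ j : ι, ‖sigmaVec σr (ω j)‖) + 1 with hCdef
  have hsumnn : 0 ≤ ∑ j : ι, ‖sigmaVec σr (ω j)‖ :=
    Finset.sum_nonneg fun j _ => norm_nonneg _
  have hC : 0 < C := by positivity
  set ε : ℝ := δ / (2 * C) with hεdef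
  have hε : 0 < ε := by positivity
  obtain ⟨a, ha0, ha⟩ := aux_small ht σr σc hnonreal hε
  set D : Fin s → ℝ := fun i => σr i (algebraMap (𝓞 K) K a) with hD
  have hDne : ∀ i, D i ≠ 0 := by
    intro i hzero
    apply ha0
    have h1 : algebraMap (𝓞 K) K a = 0 := by
      apply (σr i).injective
      rw [map_zero]
      exact hzero
    exact RingOfIntegers.coe_eq_zero_iff.mp h1
  set u : ι → (Fin s → ℝ) := fun j => sigmaVec σr (ω j * a) with hu
  -- the multiplication map L
  set L : (Fin s → ℝ) →ₗ[ℝ] (Fin s → ℝ) :=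
    { toFun := fun y => fun i => y i * D i,
      map_add' := fun y z => by funext i; simp [add_mul],
      map_smul' := fun r y => by funext i; simp [mul_assoc] } with hL
  have hLu : ∀ j, u j = L (sigmaVec σr (ω j)) := by
    intro j
    funext i
    simp only [hu, hL, LinearMap.coe_mk, AddHom.coe_mk, sigmaVec_apply, hD]
    rw [map_mul, map_mul]
  have hLsurj : Function.Surjective L := by
    intro y
    refine ⟨fun i => y i / D i, funext fun i => ?_⟩
    simp only [hL, LinearMap.coe_mk, AddHom.coe_mk]
    exact div_mul_cancel₀ _ (hDne i)
  have hspanv : Submodule.span ℝ (Set.range fun j : ι => sigmaVec σr (ω j)) = ⊤ := by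
    rw [eq_top_iff, ← aux_span σr hinj, Submodule.span_le]
    rintro _ ⟨b, rfl⟩
    have hb : (sigmaVec σr) b = ∑ j : ι, ω.repr b j • sigmaVec σr (ω j) := by
      conv_lhs => rw [← ω.sum_repr b]
      rw [map_sum]
      exact Finset.sum_congr rfl fun j _ => (map_zsmul (sigmaVec σr) _ _)
    rw [hb]
    exact Submodule.sum_mem _ fun j _ =>
      zsmul_mem (Submodule.subset_span (Set.mem_range_self j)) _
  have hspanu : Submodule.span ℝ (Set.range u) = ⊤ := by
    have hrange : Set.range u = L '' Set.range (fun j : ι => sigmaVec σr (ω j)) := by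
      rw [← Set.range_comp]
      exact congrArg _ (funext hLu)
    rw [hrange, ← Submodule.map_span, hspanv, Submodule.map_top]
    exact LinearMap.range_eq_top.mpr hLsurj
  obtain ⟨m, hm⟩ := aux_approx u hspanu x
  refine ⟨∑ j : ι, m j • (ω j * a), fun i => ?_⟩
  have hkey : sigmaVec σr (∑ j : ι, m j • (ω j * a)) = ∑ j : ι, m j • u j := by
    rw [map_sum]
    exact Finset.sum_congr rfl fun j _ => (map_zsmul (sigmaVec σr) _ _)
  -- bound on each ‖u j‖
  have hubound : ∀ j : ι, ‖u j‖ ≤ ‖sigmaVec σr (ω j)‖ * ε := by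
    intro j
    refine (pi_norm_le_iff_of_nonneg (by positivity)).mpr fun i => ?_
    have hval : u j i = sigmaVec σr (ω j) i * D i := by rw [hLu j]; rfl
    rw [hval, Real.norm_eq_abs, abs_mul]
    refine mul_le_mul ?_ (le_of_lt (ha i)) (abs_nonneg _) (norm_nonneg _)
    calc |sigmaVec σr (ω j) i| = ‖sigmaVec σr (ω j) i‖ := rfl
      _ ≤ ‖sigmaVec σr (ω j)‖ := norm_le_pi_norm _ i
  have hsum : ∑ j : ι, ‖u j‖ < δ := by
    have h1 : ∑ j : ι, ‖u j‖ ≤ (∑ j : ι, ‖sigmaVec σr (ω j)‖) * ε := by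
      rw [Finset.sum_mul]
      exact Finset.sum_le_sum fun j _ => hubound j
    have h2 : (∑ j : ι, ‖sigmaVec σr (ω j)‖) * ε ≤ C * ε := by
      refine mul_le_mul_of_nonneg_right ?_ hε.le
      rw [hCdef]; linarith
    have h3 : C * ε = δ / 2 := by
      rw [hεdef]
      field_simp
    linarith
  have hfinal := lt_of_le_of_lt hm hsum
  rw [← hkey] at hfinal
  have hcoord := norm_le_pi_norm (x - sigmaVec σr (∑ j : ι, m j • (ω j * a))) i
  have hlt := lt_of_le_of_lt hcoord hfinal
  rw [Real.norm_eq_abs, Pi.sub_apply, sigmaVec_apply, abs_sub_comm] at hlt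
  exact hlt

end aux

/-- Let `K` be a number field of degree `s + 2t`, `t > 0`, with `s` real
embeddings `σr i` and complex embeddings `σc j` (one per conjugate pair), and let the additive
group `𝓞 K` act on `ℍ^s × ℂ^t` by the translations `T_a`.  Fix `(t₁,…,t_s) ∈ ℍ^s` and let
`T = {z : zᵢ = tᵢ, i ≤ s}`.  Then the closure of the orbit `𝓞 K · T` equals
`Z = {z : Im zᵢ = Im tᵢ, i ≤ s}`. -/
theorem ot_orbit_closure_of_leaf
    (K : Type*) [Field K] [NumberField K] (s t : ℕ) (ht : 0 < t)
    (hdeg : Module.finrank ℚ K = s + 2 * t)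
    (σr : Fin s → (K →+* ℝ)) (hσr : Function.Bijective σr)
    (σc : Fin t → (K →+* ℂ)) (hσc : Function.Injective σc)
    (hnonreal : ∀ j, ∃ x, (σc j x).im ≠ 0)
    (hnonconj : ∀ j k, (starRingEnd ℂ).comp (σc j : K →+* ℂ) ≠ σc k)
    (tt : Fin s → ℂ) (htt : ∀ i, 0 < (tt i).im) :
    closure {z : Fin (s + t) → ℂ | ∃ (a : 𝓞 K) (w : Fin (s + t) → ℂ),
        (∀ i : Fin s, w (Fin.castAdd t i) = tt i) ∧ z = otT σr σc a w}
      = {z : Fin (s + t) → ℂ | ∀ i : Fin s, (z (Fin.castAdd t i)).im = (tt i).im} := by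
  apply Set.Subset.antisymm
  · apply closure_minimal
    · rintro z ⟨a, w, hw, rfl⟩ i
      show (otT σr σc a w (Fin.castAdd t i)).im = (tt i).im
      simp [otT, otEmb, hw i]
    · have hEq : {z : Fin (s + t) → ℂ | ∀ i : Fin s, (z (Fin.castAdd t i)).im = (tt i).im}
          = ⋂ i : Fin s, {z : Fin (s + t) → ℂ | (z (Fin.castAdd t i)).im = (tt i).im} := by
        ext z
        simp [Set.mem_iInter]
      rw [hEq]
      exact isClosed_iInter fun i => isClosed_eq
        (Complex.continuous_im.comp (continuous_apply _)) continuous_const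
  · intro z hz
    rw [Metric.mem_closure_iff]
    intro δ hδ
    obtain ⟨a, ha⟩ := aux_dense ht σr hσr.injective σc hnonreal
      (fun i => (z (Fin.castAdd t i)).re - (tt i).re) hδ
    set w : Fin (s + t) → ℂ := Fin.addCases (motive := fun _ => ℂ) (fun i => tt i)
      (fun j => z (Fin.natAdd s j) - σc j (algebraMap (𝓞 K) K a)) with hwdef
    refine ⟨otT σr σc a w, ⟨a, w, fun i => by simp [hwdef], rfl⟩, ?_⟩
    rw [dist_pi_lt_iff hδ]
    refine Fin.addCases (fun i => ?_) (fun j => ?_)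
    · have hval : otT σr σc a w (Fin.castAdd t i)
          = tt i + ((σr i (algebraMap (𝓞 K) K a) : ℝ) : ℂ) := by
        simp [otT, otEmb, hwdef]
      rw [hval, Complex.dist_eq]
      set d : ℂ := z (Fin.castAdd t i) - (tt i + ((σr i (algebraMap (𝓞 K) K a) : ℝ) : ℂ))
        with hd
      have him : d.im = 0 := by
        rw [hd]
        simp [hz i]
      have hre : |d.re| < δ := by
        have h2 : d.re = ((z (Fin.castAdd t i)).re - (tt i).re)
            - σr i (algebraMap (𝓞 K) K a) := by
          rw [hd]; simp [Complex.sub_re, Complex.add_re]; ring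
        rw [h2, abs_sub_comm]
        exact ha i
      exact lt_of_le_of_lt (Complex.norm_le_abs_re_add_abs_im d)
        (by rw [him, abs_zero, add_zero]; exact hre)
    · have hval : otT σr σc a w (Fin.natAdd s j) = z (Fin.natAdd s j) := by
        simp [otT, otEmb, hwdef]
      rw [hval, dist_self]
      exact hδ


end
end

section
/- Let K be a number field of degree n = s + 2t, t > 0, with s ≥ 1 real embeddings, Γ = O_K ⋊ U acting on ℍ^s × ℂ^t as above with compact quotient M_K, and π : ℍ^s × ℂ^t → M_K the projection. Let Σ be the foliation on M_K induced by span(∂/∂z_{s+1},…,∂/∂z_{s+t}), let L be a leaf of Σ and Z its closure in M_K. Then π^{-1}(Z) contains the set {z : Im z_i = α_i, i = 1,…,s} for some positive reals α_i. -/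
open NumberField

noncomputable section

/-- Multiplicative part of the OT action. -/
def otR {K : Type*} [Field K] [NumberField K] {s t : ℕ}
    (σr : Fin s → (K →+* ℝ)) (σc : Fin t → (K →+* ℂ)) (u : (𝓞 K)ˣ)
    (z : Fin (s + t) → ℂ) : Fin (s + t) → ℂ :=
  fun i => otEmb σr σc i (algebraMap (𝓞 K) K (u : 𝓞 K)) * z i

section AuxOT

variable {K : Type*} [Field K] [NumberField K] {s t : ℕ}
variable (σr : Fin s → (K →+* ℝ)) (σc : Fin t → (K →+* ℂ))

/-- The additive embedding of the ring of integers into `ℝ^s × ℂ^t`. -/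
def otEmbHom : 𝓞 K →+ (Fin s → ℝ) × (Fin t → ℂ) where
  toFun a := (fun i => σr i (algebraMap (𝓞 K) K a), fun j => σc j (algebraMap (𝓞 K) K a))
  map_zero' := by simp only [map_zero]; rfl
  map_add' a b := by simp only [map_add]; rfl

theorem aux_conj_identity (p q : ℝ) (z : ℂ) :
    ((p : ℂ) - q * Complex.I) * z + ((p : ℂ) + q * Complex.I) * (starRingEnd ℂ z) =
      ((2 * (z.re * p + z.im * q) : ℝ) : ℂ) := by
  apply Complex.ext <;>
    simp [Complex.mul_re, Complex.mul_im, Complex.sub_re, Complex.sub_im, Complex.add_re,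
      Complex.add_im] <;> ring

theorem otSpan_top (hσr : Function.Injective σr) (hσc : Function.Injective σc)
    (hnonreal : ∀ j, ∃ x, (σc j x).im ≠ 0)
    (hnonconj : ∀ j k, (starRingEnd ℂ).comp (σc j : K →+* ℂ) ≠ σc k) :
    Submodule.span ℝ (Set.range (otEmbHom σr σc)) = ⊤ := by
  classical
  by_contra hne
  obtain ⟨φ, hφne, hφbot⟩ :=
    Submodule.exists_dual_map_eq_bot_of_lt_top (lt_top_iff_ne_top.mpr hne) inferInstance
  have hvanish : ∀ a : 𝓞 K, φ (otEmbHom σr σc a) = 0 := by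
    intro a
    have hm : φ (otEmbHom σr σc a) ∈
        Submodule.map φ (Submodule.span ℝ (Set.range (otEmbHom σr σc))) :=
      Submodule.mem_map_of_mem (Submodule.subset_span ⟨a, rfl⟩)
    rw [hφbot, Submodule.mem_bot] at hm
    exact hm
  -- decomposition of φ
  have key : ∀ (x : Fin s → ℝ) (y : Fin t → ℂ),
      φ (x, y) = (∑ i, x i * φ (Pi.single i (1 : ℝ), 0))
        + ∑ j, ((y j).re * φ (0, Pi.single j (1 : ℂ))
            + (y j).im * φ (0, Pi.single j Complex.I)) := by
    intro x y
    have hxy : (x, y) = (∑ i, x i • ((Pi.single i (1 : ℝ), 0) : (Fin s → ℝ) × (Fin t → ℂ)))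
        + ∑ j, ((y j).re • (((0 : Fin s → ℝ), Pi.single j (1 : ℂ)) : (Fin s → ℝ) × (Fin t → ℂ))
             + (y j).im • (((0 : Fin s → ℝ), Pi.single j Complex.I) :
                  (Fin s → ℝ) × (Fin t → ℂ))) := by
      apply Prod.ext
      · simp only [Prod.fst_add, Prod.fst_sum, Prod.smul_mk, Prod.mk_add_mk]
        funext k
        simp [Finset.sum_apply, Pi.single_apply, Finset.sum_ite_eq']
      · simp only [Prod.snd_add, Prod.snd_sum, Prod.smul_mk, Prod.mk_add_mk]
        funext k
        simp [Finset.sum_apply, Pi.single_apply, Finset.sum_add_distrib, Finset.sum_ite_eq,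
          Complex.real_smul, Complex.re_add_im]
    rw [hxy, map_add, map_sum, map_sum]
    simp only [map_add, map_smul, smul_eq_mul]
  -- Dedekind: the characters are linearly independent, so all coefficients vanish
  let Ehat : (Fin s ⊕ (Fin t ⊕ Fin t)) → (K →+* ℂ) := fun n =>
    Sum.elim (fun i => Complex.ofRealHom.comp (σr i))
      (Sum.elim (fun j => σc j) (fun j => (starRingEnd ℂ).comp (σc j))) n
  have hreal : ∀ (i : Fin s) (x : K), (Complex.ofRealHom.comp (σr i) x).im = 0 := by
    intro i x; simp
  have hEinj : Function.Injective Ehat := by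
    rintro (i | j | j) (i' | j' | j') h <;> simp only [Ehat, Sum.elim_inl, Sum.elim_inr] at h
    · exact congrArg Sum.inl (hσr (by ext x; simpa using DFunLike.congr_fun h x))
    · obtain ⟨x, hx⟩ := hnonreal j'
      exact absurd (by rw [← h]; exact hreal i x) hx
    · obtain ⟨x, hx⟩ := hnonreal j'
      have := congrArg Complex.im (DFunLike.congr_fun h x)
      simp at this
      first | exact absurd this hx | exact absurd this.symm hx
    · obtain ⟨x, hx⟩ := hnonreal j
      exact absurd (by rw [h]; exact hreal i' x) hx
    · exact congrArg (fun j => Sum.inr (Sum.inl j)) (hσc h)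
    · exact absurd h.symm (hnonconj j' j)
    · obtain ⟨x, hx⟩ := hnonreal j
      have := congrArg Complex.im (DFunLike.congr_fun h x)
      simp at this
      first | exact absurd this hx | exact absurd this.symm hx
    · exact absurd h (hnonconj j j')
    · exact congrArg (fun j => Sum.inr (Sum.inr j))
        (hσc (by ext x; exact star_injective (DFunLike.congr_fun h x)))
  let F : (Fin s ⊕ (Fin t ⊕ Fin t)) → ((𝓞 K) →* ℂ) := fun n =>
    ((Ehat n).comp (algebraMap (𝓞 K) K)).toMonoidHom
  have hFinj : Function.Injective F := by
    intro m n h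
    apply hEinj
    apply IsLocalization.ringHom_ext (nonZeroDivisors (𝓞 K))
    exact RingHom.ext fun a => DFunLike.congr_fun h a
  have hLI := (linearIndependent_monoidHom (𝓞 K) ℂ).comp F hFinj
  rw [Fintype.linearIndependent_iff] at hLI
  set g : (Fin s ⊕ (Fin t ⊕ Fin t)) → ℂ := fun n =>
    Sum.elim (fun i => (2 * φ (Pi.single i (1 : ℝ), 0) : ℂ))
      (Sum.elim
        (fun j => ((φ (0, Pi.single j (1 : ℂ)) : ℂ) - (φ (0, Pi.single j Complex.I) : ℝ) * Complex.I))
        (fun j => ((φ (0, Pi.single j (1 : ℂ)) : ℂ) + (φ (0, Pi.single j Complex.I) : ℝ) * Complex.I))) n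
    with hg
  have hgzero : ∀ n, g n = 0 := by
    apply hLI
    funext a
    have h0 : (2 * (φ (otEmbHom σr σc a) : ℝ) : ℂ) = 0 := by rw [hvanish a]; simp
    rw [show ((otEmbHom σr σc a : (Fin s → ℝ) × (Fin t → ℂ))) =
        ((fun i => σr i (algebraMap (𝓞 K) K a), fun j => σc j (algebraMap (𝓞 K) K a))) from rfl,
      key] at h0
    push_cast at h0
    rw [Pi.zero_apply]
    rw [Finset.sum_apply]
    simp only [Pi.smul_apply, Function.comp_apply, smul_eq_mul]
    rw [Fintype.sum_sum_type, Fintype.sum_sum_type]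
    simp only [hg, Sum.elim_inl, Sum.elim_inr]
    have hF1 : ∀ (i : Fin s), (F (Sum.inl i) : 𝓞 K → ℂ) a
        = ((σr i (algebraMap (𝓞 K) K a) : ℝ) : ℂ) := fun i => rfl
    have hF2 : ∀ (j : Fin t), (F (Sum.inr (Sum.inl j)) : 𝓞 K → ℂ) a
        = σc j (algebraMap (𝓞 K) K a) := fun j => rfl
    have hF3 : ∀ (j : Fin t), (F (Sum.inr (Sum.inr j)) : 𝓞 K → ℂ) a
        = starRingEnd ℂ (σc j (algebraMap (𝓞 K) K a)) := fun j => rfl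
    simp only [hF1, hF2, hF3]
    have hterm : ∀ j : Fin t,
        ((φ (0, Pi.single j (1 : ℂ)) : ℂ) - (φ (0, Pi.single j Complex.I) : ℝ) * Complex.I)
            * σc j (algebraMap (𝓞 K) K a)
          + ((φ (0, Pi.single j (1 : ℂ)) : ℂ) + (φ (0, Pi.single j Complex.I) : ℝ) * Complex.I)
            * starRingEnd ℂ (σc j (algebraMap (𝓞 K) K a))
        = ((2 * ((σc j (algebraMap (𝓞 K) K a)).re * φ (0, Pi.single j (1 : ℂ))
            + (σc j (algebraMap (𝓞 K) K a)).im * φ (0, Pi.single j Complex.I)) : ℝ) : ℂ) :=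
      fun j => aux_conj_identity _ _ _
    rw [← Finset.sum_add_distrib]
    have hmerge : (∑ j : Fin t,
        (((φ (0, Pi.single j (1 : ℂ)) : ℂ) - (φ (0, Pi.single j Complex.I) : ℝ) * Complex.I)
            * σc j (algebraMap (𝓞 K) K a)
          + ((φ (0, Pi.single j (1 : ℂ)) : ℂ) + (φ (0, Pi.single j Complex.I) : ℝ) * Complex.I)
            * starRingEnd ℂ (σc j (algebraMap (𝓞 K) K a))))
        = ∑ j : Fin t, ((2 * ((σc j (algebraMap (𝓞 K) K a)).re * φ (0, Pi.single j (1 : ℂ))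
            + (σc j (algebraMap (𝓞 K) K a)).im * φ (0, Pi.single j Complex.I)) : ℝ) : ℂ) :=
      Finset.sum_congr rfl fun j _ => hterm j
    rw [hmerge]
    rw [mul_add, Finset.mul_sum, Finset.mul_sum] at h0
    push_cast at h0 ⊢
    convert h0 using 2
    · exact Finset.sum_congr rfl fun i _ => by ring
  have hc0 : ∀ i, φ (Pi.single i (1 : ℝ), 0) = 0 := by
    intro i
    have h1 := hgzero (Sum.inl i)
    simp only [hg, Sum.elim_inl] at h1
    simp only [mul_eq_zero, Complex.ofReal_eq_zero, OfNat.ofNat_ne_zero, false_or] at h1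
    exact h1
  have hpq0 : ∀ j, φ (0, Pi.single j (1 : ℂ)) = 0 ∧ φ (0, Pi.single j Complex.I) = 0 := by
    intro j
    have h1 := hgzero (Sum.inr (Sum.inl j))
    have h2 := hgzero (Sum.inr (Sum.inr j))
    simp only [hg, Sum.elim_inl, Sum.elim_inr] at h1 h2
    have hp' : ((φ (0, Pi.single j (1 : ℂ)) : ℝ) : ℂ) = 0 := by linear_combination (h1 + h2) / 2
    have hq' : ((φ (0, Pi.single j Complex.I) : ℝ) : ℂ) * Complex.I = 0 := by
      linear_combination (h2 - h1) / 2
    refine ⟨by exact_mod_cast hp', ?_⟩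
    rcases mul_eq_zero.mp hq' with h | h
    · exact_mod_cast h
    · exact absurd h Complex.I_ne_zero
  refine hφne (LinearMap.ext fun v => ?_)
  obtain ⟨x, y⟩ := v
  rw [key x y]
  simp [hc0, fun j => (hpq0 j).1, fun j => (hpq0 j).2]

theorem otCovering (hspan : Submodule.span ℝ (Set.range (otEmbHom (K := K) σr σc)) = ⊤) :
    ∃ R : ℝ, 0 < R ∧ ∀ v : (Fin s → ℝ) × (Fin t → ℂ),
      ∃ a : 𝓞 K, ‖v - otEmbHom σr σc a‖ ≤ R := by
  classical
  obtain ⟨bs, hbs_sub, hbs_span, hbs_li⟩ :=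
    exists_linearIndependent ℝ (Set.range (otEmbHom (K := K) σr σc))
  rw [hspan] at hbs_span
  have hfin : bs.Finite := hbs_li.setFinite
  haveI := hfin.fintype
  let B : Module.Basis bs ℝ ((Fin s → ℝ) × (Fin t → ℂ)) :=
    Module.Basis.mk hbs_li (by rw [Subtype.range_coe]; exact hbs_span.ge)
  have hpre : ∀ x : bs, ∃ a : 𝓞 K, otEmbHom σr σc a = (x : (Fin s → ℝ) × (Fin t → ℂ)) :=
    fun x => hbs_sub x.2
  choose pre hpre using hpre
  refine ⟨(∑ x : bs, ‖(x : (Fin s → ℝ) × (Fin t → ℂ))‖) + 1, by positivity, fun v => ?_⟩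
  set co : bs → ℝ := fun x => B.repr v x with hco
  refine ⟨∑ x : bs, ⌊co x⌋ • pre x, ?_⟩
  have hemb : otEmbHom σr σc (∑ x : bs, ⌊co x⌋ • pre x)
      = ∑ x : bs, (⌊co x⌋ : ℝ) • (x : (Fin s → ℝ) × (Fin t → ℂ)) := by
    rw [map_sum]
    exact Finset.sum_congr rfl fun x _ => by
      rw [map_zsmul, hpre, Int.cast_smul_eq_zsmul]
  have hv : v = ∑ x : bs, co x • (x : (Fin s → ℝ) × (Fin t → ℂ)) := by
    conv_lhs => rw [← B.sum_repr v]
    exact Finset.sum_congr rfl fun x _ => by rw [Module.Basis.mk_apply]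
  have hdiff : v - otEmbHom σr σc (∑ x : bs, ⌊co x⌋ • pre x)
      = ∑ x : bs, Int.fract (co x) • (x : (Fin s → ℝ) × (Fin t → ℂ)) := by
    rw [hemb]
    conv_lhs => rw [hv]
    rw [← Finset.sum_sub_distrib]
    exact Finset.sum_congr rfl fun x _ => by rw [← sub_smul, Int.fract]
  rw [hdiff]
  calc ‖∑ x : bs, Int.fract (co x) • (x : (Fin s → ℝ) × (Fin t → ℂ))‖
      ≤ ∑ x : bs, ‖Int.fract (co x) • (x : (Fin s → ℝ) × (Fin t → ℂ))‖ :=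
        norm_sum_le _ _
    _ ≤ ∑ x : bs, ‖(x : (Fin s → ℝ) × (Fin t → ℂ))‖ := by
        refine Finset.sum_le_sum fun x _ => ?_
        rw [norm_smul]
        have h1 : ‖Int.fract (co x)‖ ≤ 1 := by
          rw [Real.norm_eq_abs, abs_of_nonneg (Int.fract_nonneg _)]
          exact (Int.fract_lt_one _).le
        nlinarith [norm_nonneg ((x : (Fin s → ℝ) × (Fin t → ℂ)))]
    _ ≤ (∑ x : bs, ‖(x : (Fin s → ℝ) × (Fin t → ℂ))‖) + 1 := by linarith

theorem otDense (hσr : Function.Injective σr) (hσc : Function.Injective σc)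
    (hnonreal : ∀ j, ∃ x, (σc j x).im ≠ 0)
    (hnonconj : ∀ j k, (starRingEnd ℂ).comp (σc j : K →+* ℂ) ≠ σc k)
    (hsmall : ∀ ε : ℝ, 0 < ε → ∃ v : 𝓞 K,
      (∀ i, 0 < σr i (algebraMap (𝓞 K) K v)) ∧ ∀ i, σr i (algebraMap (𝓞 K) K v) < ε)
    (x : Fin s → ℝ) (ε : ℝ) (hε : 0 < ε) :
    ∃ b : 𝓞 K, ∀ i, |σr i (algebraMap (𝓞 K) K b) - x i| < ε := by
  obtain ⟨R, hR, hcov⟩ := otCovering σr σc (otSpan_top σr σc hσr hσc hnonreal hnonconj)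
  obtain ⟨v, hvpos, hvsmall⟩ := hsmall (ε / R) (by positivity)
  set p : (Fin s → ℝ) × (Fin t → ℂ) :=
    (fun i => x i / σr i (algebraMap (𝓞 K) K v), 0) with hp
  obtain ⟨a, ha⟩ := hcov p
  refine ⟨v * a, fun i => ?_⟩
  have hv0 : σr i (algebraMap (𝓞 K) K v) ≠ 0 := (hvpos i).ne'
  have hcoord : |σr i (algebraMap (𝓞 K) K a) - x i / σr i (algebraMap (𝓞 K) K v)| ≤ R := by
    have h1 : ‖(p - otEmbHom σr σc a).1 i‖ ≤ ‖(p - otEmbHom σr σc a).1‖ := norm_le_pi_norm _ i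
    have h2 : ‖(p - otEmbHom σr σc a).1‖ ≤ ‖p - otEmbHom σr σc a‖ := norm_fst_le _
    have h3 : (p - otEmbHom σr σc a).1 i
        = x i / σr i (algebraMap (𝓞 K) K v) - σr i (algebraMap (𝓞 K) K a) := rfl
    rw [h3] at h1
    rw [Real.norm_eq_abs] at h1
    rw [abs_sub_comm] at h1
    linarith
  have hmul : σr i (algebraMap (𝓞 K) K (v * a))
      = σr i (algebraMap (𝓞 K) K v) * σr i (algebraMap (𝓞 K) K a) := by
    simp [map_mul]
  rw [hmul]
  have hfact : σr i (algebraMap (𝓞 K) K v) * σr i (algebraMap (𝓞 K) K a) - x i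
      = σr i (algebraMap (𝓞 K) K v)
        * (σr i (algebraMap (𝓞 K) K a) - x i / σr i (algebraMap (𝓞 K) K v)) := by
    field_simp
  rw [hfact, abs_mul, abs_of_pos (hvpos i)]
  calc σr i (algebraMap (𝓞 K) K v)
        * |σr i (algebraMap (𝓞 K) K a) - x i / σr i (algebraMap (𝓞 K) K v)|
      ≤ σr i (algebraMap (𝓞 K) K v) * R :=
        mul_le_mul_of_nonneg_left hcoord (hvpos i).le
    _ < (ε / R) * R := by exact mul_lt_mul_of_pos_right (hvsmall i) hR
    _ = ε := by field_simp

@[simp] theorem otEmb_castAdd (i : Fin s) (x : K) :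
    otEmb σr σc (Fin.castAdd t i) x = ((σr i x : ℝ) : ℂ) := by
  simp [otEmb]

@[simp] theorem otEmb_natAdd (j : Fin t) (x : K) :
    otEmb σr σc (Fin.natAdd s j) x = σc j x := by
  simp [otEmb]

theorem otSmall
    (hcocompact : ∃ C : Set (Fin (s + t) → ℂ), IsCompact C ∧
      C ⊆ {z | ∀ i : Fin s, 0 < (z (Fin.castAdd t i)).im} ∧
      ∀ z ∈ {z : Fin (s + t) → ℂ | ∀ i : Fin s, 0 < (z (Fin.castAdd t i)).im},
        ∃ (a : 𝓞 K) (u : (𝓞 K)ˣ), otT σr σc a (otR σr σc u z) ∈ C)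
    (ε : ℝ) (hε : 0 < ε) :
    ∃ v : 𝓞 K, (∀ i, 0 < σr i (algebraMap (𝓞 K) K v)) ∧
      ∀ i, σr i (algebraMap (𝓞 K) K v) < ε := by
  obtain ⟨C, hCc, hCsub, hCall⟩ := hcocompact
  obtain ⟨Mc, hMc⟩ : ∃ Mc : ℝ, ∀ z ∈ C, ‖z‖ ≤ Mc := by
    obtain ⟨r, hr⟩ := (Metric.isBounded_iff_subset_closedBall 0).mp hCc.isBounded
    exact ⟨r, fun z hz => by simpa [Metric.mem_closedBall] using hr hz⟩
  obtain ⟨n, hn⟩ := exists_nat_gt (max 1 (Mc / ε))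
  have hn1 : (1 : ℝ) < n := lt_of_le_of_lt (le_max_left _ _) hn
  have hn0 : (0 : ℝ) < n := lt_trans one_pos hn1
  set z : Fin (s + t) → ℂ := fun _ => (n : ℝ) * Complex.I with hz
  have hzmem : z ∈ {z : Fin (s + t) → ℂ | ∀ i : Fin s, 0 < (z (Fin.castAdd t i)).im} := by
    intro i
    simp [hz, hn0]
  obtain ⟨a, u, hC⟩ := hCall z hzmem
  have him : ∀ i : Fin s,
      ((otT σr σc a (otR σr σc u z)) (Fin.castAdd t i)).im
        = σr i (algebraMap (𝓞 K) K (u : 𝓞 K)) * n := by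
    intro i
    simp [otT, otR, hz]
  refine ⟨(u : 𝓞 K), fun i => ?_, fun i => ?_⟩
  · have h1 := hCsub hC i
    rw [him i] at h1
    nlinarith
  · have h2 : ((otT σr σc a (otR σr σc u z)) (Fin.castAdd t i)).im
        ≤ ‖otT σr σc a (otR σr σc u z)‖ := by
      refine le_trans (Complex.im_le_norm ((otT σr σc a (otR σr σc u z)) (Fin.castAdd t i))) ?_
      exact norm_le_pi_norm _ _
    rw [him i] at h2
    have h3 : Mc < ε * n := by
      have := lt_of_le_of_lt (le_max_right 1 (Mc / ε)) hn
      calc Mc = (Mc / ε) * ε := by field_simp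
        _ < n * ε := by exact mul_lt_mul_of_pos_right this hε
        _ = ε * n := by ring
    have h4 : σr i (algebraMap (𝓞 K) K (u : 𝓞 K)) * n < ε * n :=
      lt_of_le_of_lt (le_trans h2 (hMc _ hC)) h3
    exact lt_of_mul_lt_mul_right h4 hn0.le

end AuxOT

/-- Let `M_K = (ℍ^s × ℂ^t)/Γ` be an Oeljeklaus–Toma manifold,
`π : ℍ^s × ℂ^t → M_K` the projection, and `Σ` the foliation on `M_K` induced by
`span(∂/∂z_{s+1},…,∂/∂z_{s+t})`.  If `Z` is the closure in `M_K` of a leaf of `Σ`, then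
`π⁻¹(Z)` contains a set `{z : Im zᵢ = αᵢ, i ≤ s}` for some positive reals `αᵢ`.
Upstairs this reads:  `π⁻¹(Z)` is the closure of the `Γ`-orbit of a lifted leaf
`T_{t₁,…,t_s} = {z : zᵢ = tᵢ, i ≤ s}` (every element of `Γ = 𝓞 K ⋊ U` is `T_a ∘ R_u`), and
this closure contains `{z : Im zᵢ = αᵢ}` for some `α ∈ (ℝ_{>0})^s`. -/
theorem ot_leaf_closure_contains_level_set
    (K : Type*) [Field K] [NumberField K] (s t : ℕ) (ht : 0 < t) (hs : 1 ≤ s)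
    (hdeg : Module.finrank ℚ K = s + 2 * t)
    (σr : Fin s → (K →+* ℝ)) (hσr : Function.Bijective σr)
    (σc : Fin t → (K →+* ℂ)) (hσc : Function.Injective σc)
    (hnonreal : ∀ j, ∃ x, (σc j x).im ≠ 0)
    (hnonconj : ∀ j k, (starRingEnd ℂ).comp (σc j : K →+* ℂ) ≠ σc k)
    (U : Subgroup (𝓞 K)ˣ)
    (hU : ∀ u ∈ U, ∀ i : Fin s, 0 < σr i (algebraMap (𝓞 K) K (u : 𝓞 K)))
    -- the quotient of `ℍ^s × ℂ^t` by `Γ` is compact: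
    (hcocompact : ∃ C : Set (Fin (s + t) → ℂ), IsCompact C ∧
      C ⊆ {z | ∀ i : Fin s, 0 < (z (Fin.castAdd t i)).im} ∧
      ∀ z ∈ {z : Fin (s + t) → ℂ | ∀ i : Fin s, 0 < (z (Fin.castAdd t i)).im},
        ∃ (a : 𝓞 K) (u : (𝓞 K)ˣ), u ∈ U ∧ otT σr σc a (otR σr σc u z) ∈ C)
    (tt : Fin s → ℂ) (htt : ∀ i, 0 < (tt i).im) :
    ∃ α : Fin s → ℝ, (∀ i, 0 < α i) ∧
      {z : Fin (s + t) → ℂ | ∀ i : Fin s, (z (Fin.castAdd t i)).im = α i} ⊆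
        closure {z : Fin (s + t) → ℂ |
          ∃ (a : 𝓞 K) (u : (𝓞 K)ˣ) (w : Fin (s + t) → ℂ), u ∈ U ∧
            (∀ i : Fin s, w (Fin.castAdd t i) = tt i) ∧ z = otT σr σc a (otR σr σc u w)} := by
  classical
  have hcc : ∃ C : Set (Fin (s + t) → ℂ), IsCompact C ∧
      C ⊆ {z | ∀ i : Fin s, 0 < (z (Fin.castAdd t i)).im} ∧
      ∀ z ∈ {z : Fin (s + t) → ℂ | ∀ i : Fin s, 0 < (z (Fin.castAdd t i)).im},
        ∃ (a : 𝓞 K) (u : (𝓞 K)ˣ), otT σr σc a (otR σr σc u z) ∈ C := by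
    obtain ⟨C, h1, h2, h3⟩ := hcocompact
    refine ⟨C, h1, h2, fun z hzm => ?_⟩
    obtain ⟨a, u, _, h⟩ := h3 z hzm
    exact ⟨a, u, h⟩
  have hdense : ∀ (x : Fin s → ℝ) (ε : ℝ), 0 < ε →
      ∃ b : 𝓞 K, ∀ i, |σr i (algebraMap (𝓞 K) K b) - x i| < ε :=
    fun x ε hε => otDense σr σc hσr.injective hσc hnonreal hnonconj
      (fun ε' hε' => otSmall σr σc hcc ε' hε') x ε hε
  refine ⟨fun i => (tt i).im, fun i => htt i, ?_⟩
  intro z hzlevel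
  rw [Metric.mem_closure_iff]
  intro ε hε
  obtain ⟨b, hb⟩ := hdense (fun i => (z (Fin.castAdd t i)).re - (tt i).re) (ε / 2)
    (by positivity)
  set w : Fin (s + t) → ℂ := fun k =>
    Fin.addCases (motive := fun _ => ℂ) (fun i => tt i)
      (fun j => z (Fin.natAdd s j) - otEmb σr σc (Fin.natAdd s j) (algebraMap (𝓞 K) K b)) k
    with hw
  refine ⟨otT σr σc b (otR σr σc 1 w), ⟨b, 1, w, one_mem U, fun i => by simp [hw], rfl⟩, ?_⟩
  have hy : ∀ k, otT σr σc b (otR σr σc 1 w) k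
      = w k + otEmb σr σc k (algebraMap (𝓞 K) K b) := by
    intro k
    have h1 : otEmb σr σc k (1 : K) = 1 := by
      refine Fin.addCases
        (motive := fun k => otEmb σr σc k (1 : K) = 1)
        (fun i => ?_) (fun j => ?_) k <;> simp
    simp [otT, otR, h1]
  have hdist : dist z (otT σr σc b (otR σr σc 1 w)) ≤ ε / 2 := by
    rw [dist_pi_le_iff (by positivity)]
    intro k
    rw [hy k]
    refine Fin.addCases
      (motive := fun k => dist (z k) (w k + otEmb σr σc k (algebraMap (𝓞 K) K b)) ≤ ε / 2)
      (fun i => ?_) (fun j => ?_) k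
    · show dist (z (Fin.castAdd t i))
          (w (Fin.castAdd t i) + otEmb σr σc (Fin.castAdd t i) (algebraMap (𝓞 K) K b)) ≤ ε / 2
      have hwk : w (Fin.castAdd t i) = tt i := by simp [hw]
      rw [hwk, otEmb_castAdd, Complex.dist_eq]
      have him : (z (Fin.castAdd t i) - (tt i + ((σr i (algebraMap (𝓞 K) K b) : ℝ) : ℂ))).im
          = 0 := by
        simp [hzlevel i]
      have hre : (z (Fin.castAdd t i) - (tt i + ((σr i (algebraMap (𝓞 K) K b) : ℝ) : ℂ))).re
          = (z (Fin.castAdd t i)).re - (tt i).re - σr i (algebraMap (𝓞 K) K b) := by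
        simp
        ring
      refine le_trans (Complex.norm_le_abs_re_add_abs_im _) ?_
      rw [him, hre, abs_zero, add_zero]
      have h5 := hb i
      rw [abs_sub_comm] at h5
      have h6 : |(z (Fin.castAdd t i)).re - (tt i).re - σr i (algebraMap (𝓞 K) K b)|
          = |(z (Fin.castAdd t i)).re - (tt i).re - σr i (algebraMap (𝓞 K) K b)| := rfl
      calc |(z (Fin.castAdd t i)).re - (tt i).re - σr i (algebraMap (𝓞 K) K b)|
          = |((z (Fin.castAdd t i)).re - (tt i).re) - σr i (algebraMap (𝓞 K) K b)| := by
            ring_nf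
        _ ≤ ε / 2 := h5.le
    · show dist (z (Fin.natAdd s j))
          (w (Fin.natAdd s j) + otEmb σr σc (Fin.natAdd s j) (algebraMap (𝓞 K) K b)) ≤ ε / 2
      have hwk : w (Fin.natAdd s j)
          = z (Fin.natAdd s j) - otEmb σr σc (Fin.natAdd s j) (algebraMap (𝓞 K) K b) := by
        simp [hw]
      rw [hwk, sub_add_cancel]
      simp
      positivity
  exact lt_of_le_of_lt hdist (by linarith)


end
end
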